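/- (Norm-equivalence transfer from weighted to standard GMRES; the core of Lemma 2.4 of the paper.) Let D ∈ ℂ^{N×N} be Hermitian positive definite and suppose there are constants α, β > 0 with α‖v‖₂ ≤ ‖v‖_D ≤ β‖v‖₂ for all v ∈ ℂ^N. Let C ∈ ℂ^{N×N} satisfy ‖I − C‖_D ≤ 1/2. Then for every d ∈ ℂ^N, every initial guess x⁰ with initial residual r⁰ := C x⁰ − d, and every m ∈ ℕ, the m-th Euclidean (standard) GMRES residual satisfies min{ ‖C x − d‖₂ : x ∈ x⁰ + K^m(C, r⁰) } ≤ (β/α) · (2√2/3)^m · ‖r⁰‖₂. -/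

import Mathlib

open scoped ComplexOrder

noncomputable section

/-- The Euclidean inner product on `ℂ^N`, linear in the first argument. -/
def inner2 {N : ℕ} (x y : Fin N → ℂ) : ℂ := ∑ i, x i * (starRingEnd ℂ) (y i)

/-- The weighted inner product `(x,y)_D := (D x, y)₂`. -/
def innerW {N : ℕ} (D : Matrix (Fin N) (Fin N) ℂ) (x y : Fin N → ℂ) : ℂ :=
  inner2 (D.mulVec x) y

/-- The weighted norm `‖x‖_D := (x,x)_D^{1/2}`. -/
def normW {N : ℕ} (D : Matrix (Fin N) (Fin N) ℂ) (x : Fin N → ℂ) : ℝ :=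
  Real.sqrt (innerW D x x).re

/-- The matrix norm induced by the weighted norm `‖·‖_D`. -/
def opNormW {N : ℕ} (D C : Matrix (Fin N) (Fin N) ℂ) : ℝ :=
  sSup {t : ℝ | ∃ x : Fin N → ℂ, x ≠ 0 ∧ t = normW D (C.mulVec x) / normW D x}

/-- The numerical range `W_D(C) := { (C x, x)_D : ‖x‖_D = 1 }`. -/
def numRange {N : ℕ} (D C : Matrix (Fin N) (Fin N) ℂ) : Set ℂ :=
  {z | ∃ x : Fin N → ℂ, normW D x = 1 ∧ z = innerW D (C.mulVec x) x}

/-- The `m`-th Krylov space `K^m(C,r) := span{C^j r : 0 ≤ j ≤ m-1}`. -/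
def krylov {N : ℕ} (C : Matrix (Fin N) (Fin N) ℂ) (r : Fin N → ℂ) (m : ℕ) :
    Submodule ℂ (Fin N → ℂ) :=
  Submodule.span ℂ {v | ∃ j < m, v = (C ^ j).mulVec r}

/-! ### Auxiliary lemmas -/

/-- The identification of `ℂ^N` with Euclidean space. -/
def toE {N : ℕ} (v : Fin N → ℂ) : EuclideanSpace ℂ (Fin N) :=
  (WithLp.equiv 2 (∀ _ : Fin N, ℂ)).symm v

lemma normW_nonneg' {N : ℕ} (D : Matrix (Fin N) (Fin N) ℂ) (x : Fin N → ℂ) :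
    0 ≤ normW D x := Real.sqrt_nonneg _

lemma normW_zero' {N : ℕ} (D : Matrix (Fin N) (Fin N) ℂ) : normW D 0 = 0 := by
  simp [normW, innerW, inner2]

set_option maxHeartbeats 1000000 in
lemma normW_one_eq {N : ℕ} (v : Fin N → ℂ) : normW 1 v = ‖toE v‖ := by
  rw [toE, EuclideanSpace.norm_eq]
  simp only [WithLp.equiv_symm_apply, PiLp.toLp_apply]
  simp [normW, innerW, inner2, Matrix.one_mulVec, Complex.mul_conj, Complex.re_sum,
    Complex.normSq_eq_norm_sq]
  norm_cast

lemma normW_pos' {N : ℕ} {D : Matrix (Fin N) (Fin N) ℂ} (hD : D.PosDef)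
    {x : Fin N → ℂ} (hx : x ≠ 0) : 0 < normW D x := by
  apply Real.sqrt_pos.2
  have h := hD.dotProduct_mulVec_pos hx
  have e : innerW D x x = dotProduct (star x) (D.mulVec x) := by
    simp [innerW, inner2, dotProduct, mul_comm]
  rw [e]
  rw [Complex.lt_def] at h
  simpa using h.1

lemma normW_one_mulVec_le {N : ℕ} (A : Matrix (Fin N) (Fin N) ℂ) (v : Fin N → ℂ) :
    normW 1 (A.mulVec v) ≤ ‖Matrix.toEuclideanCLM (𝕜 := ℂ) A‖ * normW 1 v := by
  rw [normW_one_eq, normW_one_eq]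
  have e : toE (A.mulVec v) = Matrix.toEuclideanCLM (𝕜 := ℂ) A (toE v) := by
    rw [toE, toE, WithLp.equiv_symm_apply, Matrix.toEuclideanCLM_toLp]
  rw [e]
  exact (Matrix.toEuclideanCLM (𝕜 := ℂ) A).le_opNorm _

lemma sum_mulVec' {N : ℕ} (s : Finset ℕ) (A : ℕ → Matrix (Fin N) (Fin N) ℂ)
    (v : Fin N → ℂ) : (∑ j ∈ s, A j).mulVec v = ∑ j ∈ s, (A j).mulVec v := by
  ext i
  simp only [Matrix.mulVec, dotProduct, Finset.sum_apply, Finset.sum_mul,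
    Matrix.sum_apply]
  rw [Finset.sum_comm]

lemma krylov_mono' {N : ℕ} (C : Matrix (Fin N) (Fin N) ℂ) (r : Fin N → ℂ) {m m' : ℕ}
    (h : m ≤ m') : krylov C r m ≤ krylov C r m' := by
  apply Submodule.span_mono
  rintro v ⟨j, hj, rfl⟩
  exact ⟨j, lt_of_lt_of_le hj h, rfl⟩

lemma krylov_map' {N : ℕ} (C : Matrix (Fin N) (Fin N) ℂ) (r : Fin N → ℂ) (n : ℕ)
    {v : Fin N → ℂ} (hv : v ∈ krylov C r n) : C.mulVec v ∈ krylov C r (n+1) := by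
  have hle : Submodule.map (Matrix.mulVecLin C) (krylov C r n) ≤ krylov C r (n+1) := by
    simp only [krylov, Submodule.map_span]
    apply Submodule.span_le.2
    rintro w ⟨u, ⟨j, hj, rfl⟩, rfl⟩
    apply Submodule.subset_span
    exact ⟨j+1, by omega, by simp [Matrix.mulVecLin_apply, Matrix.mulVec_mulVec, pow_succ']⟩
  exact hle ⟨v, hv, rfl⟩

lemma pow_sub_mem' {N : ℕ} (C : Matrix (Fin N) (Fin N) ℂ) (r : Fin N → ℂ) :
    ∀ j, ((1-C)^j).mulVec r ∈ krylov C r (j+1) := by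
  intro j
  induction j with
  | zero => exact Submodule.subset_span ⟨0, by omega, by simp⟩
  | succ j ih =>
    have e : ((1-C)^(j+1)).mulVec r
        = ((1-C)^j).mulVec r - C.mulVec (((1-C)^j).mulVec r) := by
      rw [pow_succ', Matrix.mulVec_mulVec]
      rw [show (1-C) * (1-C)^j = (1-C)^j - C * (1-C)^j by rw [sub_mul, one_mul]]
      rw [Matrix.sub_mulVec, ← Matrix.mulVec_mulVec]
    rw [e]
    exact sub_mem (krylov_mono' C r (by omega) ih) (krylov_map' C r (j+1) ih)

/-- **Norm-equivalence transfer from weighted to standard GMRES**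
(core of Lemma 2.4). Here `normW 1` is the Euclidean norm. -/
theorem norm_equivalence_transfer {N : ℕ} (hN : 1 ≤ N)
    (D C : Matrix (Fin N) (Fin N) ℂ) (hD : D.PosDef)
    (α β : ℝ) (hα : 0 < α) (hβ : 0 < β)
    (hlow : ∀ v : Fin N → ℂ, α * normW 1 v ≤ normW D v)
    (hhigh : ∀ v : Fin N → ℂ, normW D v ≤ β * normW 1 v)
    (h : opNormW D (1 - C) ≤ 1 / 2) :
    ∀ (d x0 : Fin N → ℂ) (m : ℕ),
      sInf {t : ℝ | ∃ x : Fin N → ℂ,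
          x - x0 ∈ krylov C (C.mulVec x0 - d) m ∧ t = normW 1 (C.mulVec x - d)} ≤
        (β / α) * (2 * Real.sqrt 2 / 3) ^ m * normW 1 (C.mulVec x0 - d) := by
  -- Step 1: the weighted contraction property of `1 - C`.
  have hcontr : ∀ v : Fin N → ℂ,
      normW D ((1-C).mulVec v) ≤ (1/2) * normW D v := by
    intro v
    by_cases hv : v = 0
    · subst hv; simp [Matrix.mulVec_zero, normW_zero']
    · set K := ‖Matrix.toEuclideanCLM (n := Fin N) (𝕜 := ℂ) (1-C)‖ with hK
      have hK0 : 0 ≤ K := norm_nonneg _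
      have hbdd : BddAbove {t : ℝ | ∃ x : Fin N → ℂ, x ≠ 0 ∧
          t = normW D ((1-C).mulVec x) / normW D x} := by
        refine ⟨(β * K) / α, ?_⟩
        rintro t ⟨x, hx, rfl⟩
        have hpos := normW_pos' hD hx
        rw [div_le_iff₀ hpos]
        have h1 : normW D ((1-C).mulVec x) ≤ β * (K * normW 1 x) := by
          calc normW D ((1-C).mulVec x) ≤ β * normW 1 ((1-C).mulVec x) := hhigh _
            _ ≤ β * (K * normW 1 x) := by
                have := normW_one_mulVec_le (1-C) x
                exact mul_le_mul_of_nonneg_left this hβ.le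
        have h2 : normW 1 x ≤ normW D x / α := by
          rw [le_div_iff₀ hα, mul_comm]; exact hlow x
        calc normW D ((1-C).mulVec x) ≤ β * (K * normW 1 x) := h1
          _ ≤ β * (K * (normW D x / α)) := by
              exact mul_le_mul_of_nonneg_left
                (mul_le_mul_of_nonneg_left h2 hK0) hβ.le
          _ = β * K / α * normW D x := by ring
      have hmem : normW D ((1-C).mulVec v) / normW D v ∈
          {t : ℝ | ∃ x : Fin N → ℂ, x ≠ 0 ∧
            t = normW D ((1-C).mulVec x) / normW D x} := ⟨v, hv, rfl⟩
      have hle : normW D ((1-C).mulVec v) / normW D v ≤ 1/2 :=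
        le_trans (le_csSup hbdd hmem) h
      have hpos := normW_pos' hD hv
      rw [div_le_iff₀ hpos] at hle
      linarith
  -- Step 2: the iterated contraction.
  have hpow : ∀ (m : ℕ) (v : Fin N → ℂ),
      normW D (((1-C)^m).mulVec v) ≤ (1/2)^m * normW D v := by
    intro m
    induction m with
    | zero => intro v; simp [Matrix.one_mulVec]
    | succ m ih =>
      intro v
      rw [pow_succ', ← Matrix.mulVec_mulVec]
      calc normW D ((1-C).mulVec (((1-C)^m).mulVec v))
          ≤ (1/2) * normW D (((1-C)^m).mulVec v) := hcontr _
        _ ≤ (1/2) * ((1/2)^m * normW D v) := by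
            have := ih v; linarith
        _ = (1/2)^(m+1) * normW D v := by ring
  intro d x0 m
  set r0 : Fin N → ℂ := C.mulVec x0 - d with hr0
  set S : Matrix (Fin N) (Fin N) ℂ := ∑ j ∈ Finset.range m, (1-C)^j with hS
  set x : Fin N → ℂ := x0 - S.mulVec r0 with hx
  -- membership in the Krylov space
  have hmem : x - x0 ∈ krylov C r0 m := by
    have e : x - x0 = -(S.mulVec r0) := by rw [hx]; abel
    rw [e]
    apply neg_mem
    rw [hS, sum_mulVec']
    apply Submodule.sum_mem
    intro j hj
    exact krylov_mono' C r0 (Finset.mem_range.1 hj) (pow_sub_mem' C r0 j)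
  -- the residual identity
  have hres : C.mulVec x - d = ((1-C)^m).mulVec r0 := by
    have hgeo : C * S = 1 - (1-C)^m := by
      have := mul_neg_geom_sum (1-C) m
      simpa using this
    rw [hx, Matrix.mulVec_sub, Matrix.mulVec_mulVec, hgeo, Matrix.sub_mulVec,
      Matrix.one_mulVec]
    rw [hr0]
    abel
  -- the norm estimate
  have hsqrt : (1:ℝ)/2 ≤ 2 * Real.sqrt 2 / 3 := by
    have h1 : (1:ℝ) ≤ Real.sqrt 2 := by
      rw [show (1:ℝ) = Real.sqrt 1 by simp]
      exact Real.sqrt_le_sqrt (by norm_num)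
    linarith
  have hhalf : ((1:ℝ)/2)^m ≤ (2 * Real.sqrt 2 / 3)^m :=
    pow_le_pow_left₀ (by norm_num) hsqrt m
  have hbound : normW 1 (((1-C)^m).mulVec r0) ≤
      (β / α) * (2 * Real.sqrt 2 / 3) ^ m * normW 1 r0 := by
    have h1 : α * normW 1 (((1-C)^m).mulVec r0) ≤ normW D (((1-C)^m).mulVec r0) :=
      hlow _
    have h2 : normW D (((1-C)^m).mulVec r0) ≤ (1/2)^m * normW D r0 := hpow m r0
    have h3 : normW D r0 ≤ β * normW 1 r0 := hhigh _
    have h0 : 0 ≤ normW 1 r0 := normW_nonneg' _ _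
    have hp0 : (0:ℝ) ≤ (1/2)^m := by positivity
    have step1 : normW 1 (((1-C)^m).mulVec r0) ≤ (β / α) * (1/2)^m * normW 1 r0 := by
      rw [div_mul_eq_mul_div, div_mul_eq_mul_div, le_div_iff₀ hα]
      nlinarith
    calc normW 1 (((1-C)^m).mulVec r0)
        ≤ (β / α) * (1/2)^m * normW 1 r0 := step1
      _ ≤ (β / α) * (2 * Real.sqrt 2 / 3)^m * normW 1 r0 := by
          apply mul_le_mul_of_nonneg_right _ h0
          exact mul_le_mul_of_nonneg_left hhalf (by positivity)
  -- conclude via `csInf_le`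
  have hbdd : BddBelow {t : ℝ | ∃ x : Fin N → ℂ,
      x - x0 ∈ krylov C (C.mulVec x0 - d) m ∧ t = normW 1 (C.mulVec x - d)} := by
    refine ⟨0, ?_⟩
    rintro t ⟨y, _, rfl⟩
    exact normW_nonneg' _ _
  have hmem2 : normW 1 (C.mulVec x - d) ∈ {t : ℝ | ∃ x : Fin N → ℂ,
      x - x0 ∈ krylov C (C.mulVec x0 - d) m ∧ t = normW 1 (C.mulVec x - d)} :=
    ⟨x, hmem, rfl⟩
  calc sInf {t : ℝ | ∃ x : Fin N → ℂ,
        x - x0 ∈ krylov C (C.mulVec x0 - d) m ∧ t = normW 1 (C.mulVec x - d)}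
      ≤ normW 1 (C.mulVec x - d) := csInf_le hbdd hmem2
    _ = normW 1 (((1-C)^m).mulVec r0) := by rw [hres]
    _ ≤ (β / α) * (2 * Real.sqrt 2 / 3) ^ m * normW 1 r0 := hbound
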